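/- Fibring application: Let X, Y be finitely supported G-valued random variables, n >= 2 an integer, and write nX for the sum of n iid copies of X (similarly nY). Then d[X;Y] + d[(n-1)X;(n-1)Y] >= d[nX;nY] + d[X | nX ; Y | nY], where the conditional Ruzsa distance d[X|nX; Y|nY] averages d[X_1 | X_1+...+X_n = t ; Y_1 | Y_1+...+Y_n = s] over the joint values (t,s). -/

import Mathlib

open scoped BigOperators Pointwise
noncomputable section

/-- A finitely supported probability mass function. -/
def IsPMF {α : Type*} (p : α → ℝ) : Prop :=
  (∀ x, 0 ≤ p x) ∧ (Function.support p).Finite ∧ ∑ᶠ x, p x = 1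

/-- Shannon entropy of a pmf. -/
def ent {α : Type*} (p : α → ℝ) : ℝ := ∑ᶠ x, -(p x * Real.log (p x))

/-- Convolution of pmfs: the distribution of the sum of independent random variables. -/
def conv {G : Type*} [AddCommGroup G] (p q : G → ℝ) : G → ℝ :=
  fun z => ∑ᶠ x, p x * q (z - x)

/-- Distribution of the negation. -/
def negp {G : Type*} [AddCommGroup G] (p : G → ℝ) : G → ℝ := fun x => p (-x)

/-- Entropic Ruzsa distance between (the distributions of) two random variables. -/
def rdist {G : Type*} [AddCommGroup G] (p q : G → ℝ) : ℝ :=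
  ent (conv p (negp q)) - ent p / 2 - ent q / 2

/-- Distribution of the sum of `n` iid copies. -/
def iterConv {G : Type*} [AddCommGroup G] (p : G → ℝ) : ℕ → G → ℝ
  | 0 => fun x => Set.indicator ({0} : Set G) (fun _ => (1 : ℝ)) x
  | n + 1 => conv (iterConv p n) p

/-- Conditional distribution of `X₁` given `X₁ + ⋯ + Xₙ = t`, for `X₁, …, Xₙ` iid with pmf `p`. -/
def condAt {G : Type*} [AddCommGroup G] (p : G → ℝ) (n : ℕ) (t : G) : G → ℝ :=
  fun x => p x * iterConv p (n - 1) (t - x) / iterConv p n t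

/-- Conditional entropic Ruzsa distance `d[X | nX ; Y | nY]`, averaging over the values of the
sums `nX` and `nY`. -/
def condRdist {G : Type*} [AddCommGroup G] (p q : G → ℝ) (n : ℕ) : ℝ :=
  ∑ᶠ t, ∑ᶠ s, iterConv p n t * iterConv q n s * rdist (condAt p n t) (condAt q n s)

/- ## Toolkit -/
section Toolkit

open Function Real Finset

variable {α β : Type*} {G : Type*} [AddCommGroup G]

lemma sum_of_supp {M : Type*} [AddCommMonoid M] {f : α → M} {s : Finset α}
    (h : ∀ x, f x ≠ 0 → x ∈ s) : ∑ᶠ x, f x = ∑ x ∈ s, f x :=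
  finsum_eq_finset_sum_of_support_subset _ (fun x hx => h x hx)

lemma finsum_sub_right (g : G → ℝ) (x : G) : ∑ᶠ t, g (t - x) = ∑ᶠ t, g t := by
  have := finsum_comp_equiv (Equiv.addRight x) (f := fun t => g (t - x))
  simpa using this.symm

lemma finsum_sub_left (g : G → ℝ) (x : G) : ∑ᶠ t, g (x - t) = ∑ᶠ t, g t := by
  have := finsum_comp_equiv (Equiv.subLeft x) (f := fun t => g (x - t))
  simpa using this.symm

/-- Convert a double finsum to a double finset sum. -/
lemma finsum2_eq {f : α → β → ℝ} {s : Finset α} {t : Finset β}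
    (h : ∀ a b, f a b ≠ 0 → a ∈ s ∧ b ∈ t) :
    ∑ᶠ a, ∑ᶠ b, f a b = ∑ a ∈ s, ∑ b ∈ t, f a b := by
  have h1 : ∀ a, ∑ᶠ b, f a b = ∑ b ∈ t, f a b :=
    fun a => sum_of_supp (fun b hb => (h a b hb).2)
  rw [sum_of_supp (s := s) (f := fun a => ∑ᶠ b, f a b)]
  · exact Finset.sum_congr rfl fun a _ => h1 a
  · intro a ha
    rw [h1 a] at ha
    obtain ⟨b, _, hb⟩ := Finset.exists_ne_zero_of_sum_ne_zero ha
    exact (h a b hb).1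

lemma IsPMF.nonneg {p : α → ℝ} (hp : IsPMF p) : ∀ x, 0 ≤ p x := hp.1
lemma IsPMF.fin {p : α → ℝ} (hp : IsPMF p) : (support p).Finite := hp.2.1
lemma IsPMF.sum_one {p : α → ℝ} (hp : IsPMF p) : ∑ᶠ x, p x = 1 := hp.2.2

lemma conv_nonneg' {p q : G → ℝ} (hp : ∀ x, 0 ≤ p x) (hq : ∀ x, 0 ≤ q x) (z : G) :
    0 ≤ conv p q z :=
  finsum_nonneg fun x => mul_nonneg (hp x) (hq _)

lemma conv_ne_zero {p q : G → ℝ} {z : G} (h : conv p q z ≠ 0) :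
    ∃ x, p x ≠ 0 ∧ q (z - x) ≠ 0 := by
  by_contra hc
  push_neg at hc
  exact h (finsum_eq_zero_of_forall_eq_zero fun x => by
    rcases eq_or_ne (p x) 0 with h0 | h0
    · simp [h0]
    · simp [hc x h0])

lemma le_conv {p q : G → ℝ} (hp : ∀ x, 0 ≤ p x) (hq : ∀ x, 0 ≤ q x)
    (hpf : (support p).Finite) (x z : G) : p x * q (z - x) ≤ conv p q z := by
  have hfin : (support fun x => p x * q (z - x)).Finite :=
    hpf.subset (fun x hx => by
      simp only [mem_support] at hx ⊢
      exact fun h0 => hx (by simp [h0]))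
  exact single_le_finsum x hfin (fun j => mul_nonneg (hp j) (hq _))

lemma conv_comm (p q : G → ℝ) : conv p q = conv q p := by
  funext z
  show ∑ᶠ x, p x * q (z - x) = ∑ᶠ x, q x * p (z - x)
  rw [← finsum_sub_left (fun x => p x * q (z - x)) z]
  simp [mul_comm]

lemma negp_conv (p q : G → ℝ) : negp (conv p q) = conv (negp p) (negp q) := by
  funext z
  show ∑ᶠ x, p x * q (-z - x) = ∑ᶠ x, p (-x) * q (-(z - x))
  have := finsum_comp_equiv (Equiv.neg G) (f := fun x => p (-x) * q (-(z - x)))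
  rw [← this]
  simp only [Equiv.neg_apply, neg_neg]
  apply finsum_congr
  intro x
  congr 1
  congr 1
  abel

end Toolkit

section Toolkit2

open Function Real Finset

variable {α β : Type*} {G : Type*} [AddCommGroup G]

lemma sum_shift_eq_one {g : G → ℝ} (hg1 : ∑ᶠ y, g y = 1) {S : Finset G} {x : G}
    (h : ∀ t, g (t - x) ≠ 0 → t ∈ S) : ∑ t ∈ S, g (t - x) = 1 := by
  rw [← sum_of_supp h, finsum_sub_right, hg1]

lemma sum_shift_left_eq_one {g : G → ℝ} (hg1 : ∑ᶠ y, g y = 1) {S : Finset G} {x : G}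
    (h : ∀ t, g (x - t) ≠ 0 → t ∈ S) : ∑ t ∈ S, g (x - t) = 1 := by
  rw [← sum_of_supp h, finsum_sub_left, hg1]

lemma conv_supp {p q : G → ℝ} : support (conv p q) ⊆ support p + support q := by
  intro z hz
  obtain ⟨x, hx, h2⟩ := conv_ne_zero hz
  exact ⟨x, hx, z - x, h2, by simp⟩

lemma conv_fin {p q : G → ℝ} (hp : (support p).Finite) (hq : (support q).Finite) :
    (support (conv p q)).Finite :=
  (hp.add hq).subset conv_supp

lemma sum_eq_one {p : α → ℝ} (hp : IsPMF p) {s : Finset α}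
    (h : ∀ x, p x ≠ 0 → x ∈ s) : ∑ x ∈ s, p x = 1 := by
  rw [← sum_of_supp h]; exact hp.sum_one

lemma conv_isPMF {p q : G → ℝ} (hp : IsPMF p) (hq : IsPMF q) : IsPMF (conv p q) := by
  classical
  refine ⟨conv_nonneg' hp.1 hq.1, conv_fin hp.fin hq.fin, ?_⟩
  set Sp := hp.fin.toFinset with hSp
  set Sq := hq.fin.toFinset with hSq
  have hmem : ∀ x t : G, p x ≠ 0 → q (t - x) ≠ 0 → t ∈ Sp + Sq := by
    intro x t h1 h2
    exact Finset.mem_add.2 ⟨x, by simp [hSp, h1], t - x, by simp [hSq, h2], by abel⟩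
  rw [sum_of_supp (s := Sp + Sq) (f := conv p q) (fun z hz => by
    obtain ⟨x, hx, h2⟩ := conv_ne_zero hz
    exact hmem x z hx h2)]
  have hrow : ∀ z, conv p q z = ∑ x ∈ Sp, p x * q (z - x) := by
    intro z
    exact sum_of_supp (fun x hx => by
      simp only [hSp, Set.Finite.mem_toFinset, mem_support]
      exact fun h0 => hx (by simp [h0]))
  calc ∑ z ∈ Sp + Sq, conv p q z = ∑ z ∈ Sp + Sq, ∑ x ∈ Sp, p x * q (z - x) := by
        exact Finset.sum_congr rfl fun z _ => hrow z
    _ = ∑ x ∈ Sp, ∑ z ∈ Sp + Sq, p x * q (z - x) := Finset.sum_comm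
    _ = ∑ x ∈ Sp, p x := by
        refine Finset.sum_congr rfl fun x hx => ?_
        have hpx : p x ≠ 0 := by simpa [hSp] using hx
        rw [← Finset.mul_sum, sum_shift_eq_one hq.sum_one (fun t ht => hmem x t hpx ht),
          mul_one]
    _ = 1 := sum_eq_one hp (fun x hx => by simp [hSp, hx])

lemma conv_assoc (p q r : G → ℝ) (hp : (support p).Finite) (hq : (support q).Finite) :
    conv (conv p q) r = conv p (conv q r) := by
  classical
  funext z
  set Sp := hp.toFinset with hSp
  set Sq := hq.toFinset with hSq
  have hrow : ∀ y, conv p q y = ∑ x ∈ Sp, p x * q (y - x) := by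
    intro y
    exact sum_of_supp (fun x hx => by
      simp only [hSp, Set.Finite.mem_toFinset, mem_support]
      exact fun h0 => hx (by simp [h0]))
  have hmem : ∀ x y : G, p x ≠ 0 → q (y - x) ≠ 0 → y ∈ Sp + Sq := by
    intro x y h1 h2
    exact Finset.mem_add.2 ⟨x, by simp [hSp, h1], y - x, by simp [hSq, h2], by abel⟩
  show ∑ᶠ y, conv p q y * r (z - y) = _
  rw [sum_of_supp (s := Sp + Sq) (f := fun y => conv p q y * r (z - y)) (fun y hy => by
    have : conv p q y ≠ 0 := fun h0 => hy (by simp [h0])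
    obtain ⟨x, hx, h2⟩ := conv_ne_zero this
    exact hmem x y hx h2)]
  calc ∑ y ∈ Sp + Sq, conv p q y * r (z - y)
      = ∑ y ∈ Sp + Sq, ∑ x ∈ Sp, p x * q (y - x) * r (z - y) := by
        refine Finset.sum_congr rfl fun y _ => ?_
        rw [hrow y, Finset.sum_mul]
    _ = ∑ x ∈ Sp, ∑ y ∈ Sp + Sq, p x * q (y - x) * r (z - y) := Finset.sum_comm
    _ = ∑ x ∈ Sp, p x * conv q r (z - x) := by
        refine Finset.sum_congr rfl fun x hx => ?_
        have hpx : p x ≠ 0 := by simpa [hSp] using hx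
        have : ∑ y ∈ Sp + Sq, p x * q (y - x) * r (z - y)
            = ∑ᶠ y, p x * q (y - x) * r (z - y) := by
          refine (sum_of_supp (fun y hy => ?_)).symm
          have h2 : q (y - x) ≠ 0 := fun h0 => hy (by simp [h0])
          exact hmem x y hpx h2
        rw [this]
        have hshift := finsum_comp_equiv (Equiv.addLeft x)
          (f := fun y => p x * q (y - x) * r (z - y))
        rw [← hshift]
        simp only [Equiv.coe_addLeft]
        have : ∀ w, p x * q (x + w - x) * r (z - (x + w)) = p x * (q w * r (z - x - w)) := by
          intro w
          have h1 : x + w - x = w := by abel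
          have h2 : z - (x + w) = z - x - w := by abel
          rw [h1, h2]; ring
        rw [finsum_congr this]
        rw [show p x * conv q r (z - x) = ∑ᶠ w, p x * (q w * r (z - x - w)) from
          mul_finsum _ _]
    _ = ∑ᶠ x, p x * conv q r (z - x) := by
        refine (sum_of_supp (fun x hx => ?_)).symm
        simp only [hSp, Set.Finite.mem_toFinset, mem_support]
        exact fun h0 => hx (by simp [h0])
    _ = conv p (conv q r) z := rfl

lemma ent_eq_sum {p : α → ℝ} {s : Finset α} (h : ∀ x, p x ≠ 0 → x ∈ s) :
    ent p = -∑ x ∈ s, p x * Real.log (p x) := by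
  rw [ent, sum_of_supp (s := s) (f := fun x => -(p x * Real.log (p x))) (fun x hx => by
    refine h x fun h0 => hx (by simp [h0]))]
  simp

/-- The Gibbs inequality. -/
lemma gibbs {f g : α → ℝ} (hf0 : ∀ x, 0 ≤ f x) (hffin : (support f).Finite)
    (hf1 : ∑ᶠ x, f x = 1) (hg0 : ∀ x, 0 ≤ g x) (hgfin : (support g).Finite)
    (hg1 : ∑ᶠ x, g x ≤ 1) (hfg : ∀ x, f x ≠ 0 → g x ≠ 0) :
    ent f ≤ -∑ᶠ x, f x * Real.log (g x) := by
  classical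
  set S := hffin.toFinset ∪ hgfin.toFinset with hS
  have hfS : ∀ x, f x ≠ 0 → x ∈ S := fun x hx => by simp [hS, hx]
  have hgS : ∀ x, g x ≠ 0 → x ∈ S := fun x hx => by simp [hS, hx]
  rw [ent_eq_sum hfS, sum_of_supp (s := S) (f := fun x => f x * Real.log (g x))
    (fun x hx => hfS x (fun h0 => hx (by simp [h0])))]
  have key : ∑ x ∈ S, (f x * Real.log (g x) - f x * Real.log (f x)) ≤ 0 := by
    have hterm : ∀ x ∈ S, f x * Real.log (g x) - f x * Real.log (f x) ≤ g x - f x := by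
      intro x _
      rcases eq_or_ne (f x) 0 with h0 | h0
      · simp [h0, hg0 x]
      · have hfpos : 0 < f x := (hf0 x).lt_of_ne (Ne.symm h0)
        have hgpos : 0 < g x := (hg0 x).lt_of_ne (Ne.symm (hfg x h0))
        have h2 : Real.log (g x / f x) ≤ g x / f x - 1 :=
          Real.log_le_sub_one_of_pos (div_pos hgpos hfpos)
        have h4 : f x * (g x / f x - 1) = g x - f x := by field_simp
        calc f x * Real.log (g x) - f x * Real.log (f x)
            = f x * (Real.log (g x) - Real.log (f x)) := by ring
          _ = f x * Real.log (g x / f x) := by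
              rw [Real.log_div (ne_of_gt hgpos) (ne_of_gt hfpos)]
          _ ≤ f x * (g x / f x - 1) := mul_le_mul_of_nonneg_left h2 hfpos.le
          _ = g x - f x := h4
    calc ∑ x ∈ S, (f x * Real.log (g x) - f x * Real.log (f x))
        ≤ ∑ x ∈ S, (g x - f x) := Finset.sum_le_sum hterm
      _ = ∑ x ∈ S, g x - ∑ x ∈ S, f x := Finset.sum_sub_distrib _ _
      _ ≤ 0 := by
          have h1 : ∑ x ∈ S, f x = 1 := by rw [← sum_of_supp hfS, hf1]
          have h2 : ∑ x ∈ S, g x ≤ 1 := by rw [← sum_of_supp hgS]; exact hg1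
          linarith
  rw [Finset.sum_sub_distrib] at key
  linarith

end Toolkit2

section Toolkit3

open Function Real Finset

variable {α : Type*} {G : Type*} [AddCommGroup G]

lemma iterConv_isPMF {p : G → ℝ} (hp : IsPMF p) : ∀ k, IsPMF (iterConv p k)
  | 0 => by
    refine ⟨fun x => Set.indicator_nonneg (s := ({0} : Set G)) (f := fun _ => (1:ℝ))
        (fun _ _ => by norm_num) x,
      (Set.finite_singleton (0 : G)).subset Set.support_indicator_subset, ?_⟩
    show ∑ᶠ x, Set.indicator ({0} : Set G) (fun _ => (1 : ℝ)) x = 1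
    rw [← finsum_mem_def, finsum_mem_singleton]
  | k + 1 => conv_isPMF (iterConv_isPMF hp k) hp

/-- Chain rule: the average entropy of the conditional distributions. -/
lemma chain_rule {f g : G → ℝ} (hf : IsPMF f) (hg : IsPMF g) :
    ∑ᶠ t, conv f g t * ent (fun x => f x * g (t - x) / conv f g t)
      = ent f + ent g - ent (conv f g) := by
  classical
  set h := conv f g with hh
  set Sf := hf.fin.toFinset with hSf
  set Sg := hg.fin.toFinset with hSg
  set Sh := Sf + Sg with hSh
  have hmem : ∀ x t : G, f x ≠ 0 → g (t - x) ≠ 0 → t ∈ Sh := by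
    intro x t h1 h2
    exact Finset.mem_add.2 ⟨x, by simp [hSf, h1], t - x, by simp [hSg, h2], by simp⟩
  have hhS : ∀ t, h t ≠ 0 → t ∈ Sh := by
    intro t ht
    obtain ⟨x, hx, h2⟩ := conv_ne_zero ht
    exact hmem x t hx h2
  have hfS : ∀ x, f x ≠ 0 → x ∈ Sf := fun x hx => by simp [hSf, hx]
  have hle : ∀ x t : G, f x * g (t - x) ≤ h t := fun x t => le_conv hf.1 hg.1 hf.fin x t
  have hrow : ∀ t, h t = ∑ x ∈ Sf, f x * g (t - x) := by
    intro t
    exact sum_of_supp (fun x hx => hfS x (fun h0 => hx (by simp [h0])))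
  have hnum_nonneg : ∀ x t : G, 0 ≤ f x * g (t - x) :=
    fun x t => mul_nonneg (hf.1 x) (hg.1 _)
  have KEY : ∀ t x : G, -(h t * ((f x * g (t - x) / h t) * Real.log (f x * g (t - x) / h t)))
      = -(f x * g (t - x) * Real.log (f x)) - f x * g (t - x) * Real.log (g (t - x))
        + f x * g (t - x) * Real.log (h t) := by
    intro t x
    rcases eq_or_ne (f x * g (t - x)) 0 with h0 | h0
    · simp [h0]
    · have hpos : 0 < f x * g (t - x) := (hnum_nonneg x t).lt_of_ne (Ne.symm h0)
      have hhpos : 0 < h t := lt_of_lt_of_le hpos (hle x t)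
      have hfx : f x ≠ 0 := fun e => h0 (by simp [e])
      have hgx : g (t - x) ≠ 0 := fun e => h0 (by simp [e])
      have e1 : h t * (f x * g (t - x) / h t) = f x * g (t - x) := by
        field_simp
      have e2 : Real.log (f x * g (t - x) / h t)
          = Real.log (f x) + Real.log (g (t - x)) - Real.log (h t) := by
        rw [Real.log_div h0 (ne_of_gt hhpos), Real.log_mul hfx hgx]
      calc -(h t * ((f x * g (t - x) / h t) * Real.log (f x * g (t - x) / h t)))
          = -(h t * (f x * g (t - x) / h t) * Real.log (f x * g (t - x) / h t)) := by ring
        _ = -(f x * g (t - x) * (Real.log (f x) + Real.log (g (t - x)) - Real.log (h t))) := by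
            rw [e1, e2]
        _ = _ := by ring
  -- convert LHS to a double finset sum
  have hent : ∀ t, h t * ent (fun x => f x * g (t - x) / h t)
      = ∑ x ∈ Sf, -(h t * ((f x * g (t - x) / h t) * Real.log (f x * g (t - x) / h t))) := by
    intro t
    rw [ent_eq_sum (s := Sf) (fun x hx => by
      refine hfS x fun h0 => hx ?_
      simp [h0])]
    rw [mul_neg, Finset.mul_sum, ← Finset.sum_neg_distrib]
  have hgS : ∀ v, g v ≠ 0 → v ∈ Sg := fun v hv => by simp [hSg, hv]
  have hE1 : ∑ t ∈ Sh, ∑ x ∈ Sf, f x * g (t - x) * Real.log (f x) = -ent f := by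
    rw [Finset.sum_comm]
    have hinner : ∀ x ∈ Sf, ∑ t ∈ Sh, f x * g (t - x) * Real.log (f x)
        = f x * Real.log (f x) := by
      intro x _
      rcases eq_or_ne (f x) 0 with h0 | h0
      · simp [h0]
      · rw [Finset.sum_congr rfl (fun t _ => by
          show f x * g (t - x) * Real.log (f x) = f x * Real.log (f x) * g (t - x)
          ring)]
        rw [← Finset.mul_sum, sum_shift_eq_one hg.sum_one (fun t ht => hmem x t h0 ht),
          mul_one]
    rw [Finset.sum_congr rfl hinner, ent_eq_sum hfS, neg_neg]
  have hE2 : ∑ t ∈ Sh, ∑ x ∈ Sf, f x * g (t - x) * Real.log (g (t - x)) = -ent g := by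
    rw [Finset.sum_comm]
    have hinner : ∀ x ∈ Sf, ∑ t ∈ Sh, f x * g (t - x) * Real.log (g (t - x))
        = f x * ∑ v ∈ Sg, g v * Real.log (g v) := by
      intro x _
      rcases eq_or_ne (f x) 0 with h0 | h0
      · simp [h0]
      · rw [Finset.sum_congr rfl (fun t _ => by
          show f x * g (t - x) * Real.log (g (t - x)) = f x * (g (t - x) * Real.log (g (t - x)))
          ring), ← Finset.mul_sum]
        congr 1
        have e1 : ∑ t ∈ Sh, g (t - x) * Real.log (g (t - x))
            = ∑ᶠ t, g (t - x) * Real.log (g (t - x)) := by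
          refine (sum_of_supp (fun t ht => ?_)).symm
          exact hmem x t h0 (fun e => ht (by simp [e]))
        rw [e1, finsum_sub_right (fun v => g v * Real.log (g v)) x,
          sum_of_supp (fun v hv => hgS v (fun e => hv (by simp [e])))]
    rw [Finset.sum_congr rfl hinner, ← Finset.sum_mul, sum_eq_one hf hfS, one_mul,
      ent_eq_sum hgS, neg_neg]
  have hE3 : ∑ t ∈ Sh, ∑ x ∈ Sf, f x * g (t - x) * Real.log (h t) = -ent h := by
    have hinner : ∀ t ∈ Sh, ∑ x ∈ Sf, f x * g (t - x) * Real.log (h t)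
        = h t * Real.log (h t) := by
      intro t _
      rw [← Finset.sum_mul, ← hrow t]
    rw [Finset.sum_congr rfl hinner, ent_eq_sum hhS, neg_neg]
  have hfinal : ∑ᶠ t, h t * ent (fun x => f x * g (t - x) / h t)
      = -(∑ t ∈ Sh, ∑ x ∈ Sf, f x * g (t - x) * Real.log (f x))
        - (∑ t ∈ Sh, ∑ x ∈ Sf, f x * g (t - x) * Real.log (g (t - x)))
        + ∑ t ∈ Sh, ∑ x ∈ Sf, f x * g (t - x) * Real.log (h t) := by
    rw [sum_of_supp (s := Sh) (f := fun t => h t * ent fun x => f x * g (t - x) / h t)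
      (fun t ht => hhS t (fun e => ht (by simp [e])))]
    rw [Finset.sum_congr rfl (fun t _ => hent t)]
    rw [Finset.sum_congr rfl (fun t _ => Finset.sum_congr rfl (fun x _ => KEY t x))]
    simp only [Finset.sum_add_distrib, Finset.sum_sub_distrib, Finset.sum_neg_distrib]
  rw [hfinal, hE1, hE2, hE3]
  ring

end Toolkit3

section Main

open Function Real Finset

variable {G : Type*} [AddCommGroup G]

/-- conditional distribution at `t`. -/
def ctf (p p' : G → ℝ) (t : G) : G → ℝ := fun x => p x * p' (t - x) / conv p p' t

/-- conditional distribution of the difference. -/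
def nuf (p q p' q' : G → ℝ) (t s : G) : G → ℝ := conv (ctf p p' t) (negp (ctf q q' s))

/-- joint weight. -/
def Kf (p q p' q' : G → ℝ) (t s u : G) : ℝ :=
  conv p p' t * conv q q' s * nuf p q p' q' t s u

variable {p q p' q' : G → ℝ}

lemma negp_fin {r : G → ℝ} (h : (support r).Finite) : (support (negp r)).Finite := by
  have : support (negp r) = Neg.neg ⁻¹' support r := rfl
  rw [this]
  exact h.preimage (neg_injective.injOn)

lemma negp_nonneg {r : G → ℝ} (h : ∀ x, 0 ≤ r x) : ∀ x, 0 ≤ negp r x := fun x => h (-x)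

lemma ctf_nonneg (hp : ∀ x, 0 ≤ p x) (hp' : ∀ x, 0 ≤ p' x) (t : G) :
    ∀ x, 0 ≤ ctf p p' t x :=
  fun x => div_nonneg (mul_nonneg (hp x) (hp' _)) (conv_nonneg' hp hp' t)

lemma ctf_supp (t : G) : ∀ x, ctf p p' t x ≠ 0 → p x ≠ 0 := by
  intro x hx h0
  exact hx (by simp [ctf, h0])

lemma ctf_fin (hp : (support p).Finite) (t : G) : (support (ctf p p' t)).Finite :=
  hp.subset (fun x hx => ctf_supp t x hx)

lemma ctf_mul (hp : IsPMF p) (hp' : IsPMF p') (t x : G) :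
    conv p p' t * ctf p p' t x = p x * p' (t - x) := by
  rcases eq_or_ne (conv p p' t) 0 with h0 | h0
  · have hle := le_conv hp.1 hp'.1 hp.fin x t
    rw [h0] at hle
    have : p x * p' (t - x) = 0 :=
      le_antisymm hle (mul_nonneg (hp.1 x) (hp'.1 _))
    simp [ctf, this, h0]
  · rw [ctf, mul_div_cancel₀ _ h0]

lemma nuf_apply (t s u : G) :
    nuf p q p' q' t s u = ∑ᶠ x, ctf p p' t x * ctf q q' s (x - u) := by
  show ∑ᶠ x, ctf p p' t x * ctf q q' s (-(u - x)) = _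
  apply finsum_congr
  intro x
  rw [neg_sub]

lemma nuf_nonneg (hp : ∀ x, 0 ≤ p x) (hq : ∀ x, 0 ≤ q x) (hp' : ∀ x, 0 ≤ p' x)
    (hq' : ∀ x, 0 ≤ q' x) (t s u : G) : 0 ≤ nuf p q p' q' t s u :=
  conv_nonneg' (ctf_nonneg hp hp' t) (negp_nonneg (ctf_nonneg hq hq' s)) u

lemma nuf_supp (t s : G) : ∀ u, nuf p q p' q' t s u ≠ 0 →
    ∃ x, p x ≠ 0 ∧ q (x - u) ≠ 0 := by
  intro u hu
  rw [nuf_apply] at hu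
  by_contra hc
  push_neg at hc
  refine hu (finsum_eq_zero_of_forall_eq_zero fun x => ?_)
  rcases eq_or_ne (p x) 0 with h0 | h0
  · have : ctf p p' t x = 0 := by simp [ctf, h0]
    simp [this]
  · have : ctf q q' s (x - u) = 0 := by simp [ctf, hc x h0]
    simp [this]

lemma Kf_nonneg (hp : IsPMF p) (hq : IsPMF q) (hp' : IsPMF p') (hq' : IsPMF q')
    (t s u : G) : 0 ≤ Kf p q p' q' t s u :=
  mul_nonneg (mul_nonneg (conv_nonneg' hp.1 hp'.1 t) (conv_nonneg' hq.1 hq'.1 s))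
    (nuf_nonneg hp.1 hq.1 hp'.1 hq'.1 t s u)

/-- Expansion of the joint weight as a sum over the first variable. -/
lemma Kf_eq_sum (hp : IsPMF p) (hq : IsPMF q) (hp' : IsPMF p') (hq' : IsPMF q')
    {Sp : Finset G} (HSp : ∀ x, p x ≠ 0 → x ∈ Sp) (t s u : G) :
    Kf p q p' q' t s u
      = ∑ x ∈ Sp, p x * p' (t - x) * (q (x - u) * q' (s - x + u)) := by
  rw [Kf, nuf_apply]
  rw [mul_finsum (fun x => ctf p p' t x * ctf q q' s (x - u))
    (conv p p' t * conv q q' s)]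
  have key : ∀ x, conv p p' t * conv q q' s * (ctf p p' t x * ctf q q' s (x - u))
      = p x * p' (t - x) * (q (x - u) * q' (s - x + u)) := by
    intro x
    have e1 : conv p p' t * conv q q' s * (ctf p p' t x * ctf q q' s (x - u))
        = (conv p p' t * ctf p p' t x) * (conv q q' s * ctf q q' s (x - u)) := by ring
    rw [e1, ctf_mul hp hp', ctf_mul hq hq']
    have : s - (x - u) = s - x + u := by abel
    rw [this]
  rw [finsum_congr key]
  exact sum_of_supp (fun x hx => HSp x (fun h0 => hx (by simp [h0])))

/-- marginal over `u`. -/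
lemma Kf_marg_u (hp : IsPMF p) (hq : IsPMF q) (hp' : IsPMF p') (hq' : IsPMF q')
    {Sp SU : Finset G} (HSp : ∀ x, p x ≠ 0 → x ∈ Sp)
    (HSU : ∀ x u, p x ≠ 0 → q (x - u) ≠ 0 → u ∈ SU) (t s : G) :
    ∑ u ∈ SU, Kf p q p' q' t s u = conv p p' t * conv q q' s := by
  rw [Finset.sum_congr rfl (fun u _ => Kf_eq_sum hp hq hp' hq' HSp t s u), Finset.sum_comm]
  have hinner : ∀ x ∈ Sp, ∑ u ∈ SU, p x * p' (t - x) * (q (x - u) * q' (s - x + u))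
      = p x * p' (t - x) * conv q q' s := by
    intro x _
    rcases eq_or_ne (p x) 0 with h0 | h0
    · simp [h0]
    · rw [← Finset.mul_sum]
      congr 1
      have e1 : ∀ u : G, q (x - u) * q' (s - x + u)
          = (fun z => q z * q' (s - z)) (x - u) := by
        intro u
        show _ = q (x - u) * q' (s - (x - u))
        have : s - (x - u) = s - x + u := by abel
        rw [this]
      rw [Finset.sum_congr rfl (fun u _ => e1 u)]
      rw [← sum_of_supp (fun u hu => HSU x u h0 (fun e => hu (by simp [e])))]
      rw [finsum_sub_left (fun z => q z * q' (s - z)) x]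
      rfl
  rw [Finset.sum_congr rfl hinner, ← Finset.sum_mul]
  congr 1
  rw [← sum_of_supp (fun x hx => HSp x (fun h0 => hx (by simp [h0])))]
  rfl

/-- pointwise domination: `K t s u ≤ a u * b (t - s - u)`. -/
lemma Kf_le (hp : IsPMF p) (hq : IsPMF q) (hp' : IsPMF p') (hq' : IsPMF q')
    {Sp : Finset G} (HSp : ∀ x, p x ≠ 0 → x ∈ Sp) (t s u : G) :
    Kf p q p' q' t s u ≤ conv p (negp q) u * conv p' (negp q') (t - s - u) := by
  rw [Kf_eq_sum hp hq hp' hq' HSp t s u]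
  have ha : conv p (negp q) u = ∑ x ∈ Sp, p x * q (x - u) := by
    rw [show conv p (negp q) u = ∑ᶠ x, p x * q (x - u) from finsum_congr (fun x => by
      show p x * q (-(u - x)) = _
      rw [neg_sub])]
    exact sum_of_supp (fun x hx => HSp x (fun h0 => hx (by simp [h0])))
  rw [ha, Finset.sum_mul]
  refine Finset.sum_le_sum (fun x _ => ?_)
  have hone : p' (t - x) * q' (s - x + u)
      = p' (t - x) * negp q' ((t - s - u) - (t - x)) := by
    congr 1
    show _ = q' (-((t - s - u) - (t - x)))
    congr 1
    abel
  have hle : p' (t - x) * negp q' ((t - s - u) - (t - x)) ≤ conv p' (negp q') (t - s - u) :=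
    le_conv hp'.1 (negp_nonneg hq'.1) hp'.fin (t - x) (t - s - u)
  calc p x * p' (t - x) * (q (x - u) * q' (s - x + u))
      = (p x * q (x - u)) * (p' (t - x) * q' (s - x + u)) := by ring
    _ ≤ (p x * q (x - u)) * conv p' (negp q') (t - s - u) := by
        refine mul_le_mul_of_nonneg_left ?_ (mul_nonneg (hp.1 x) (hq.1 _))
        rw [hone] at *
        exact hle
    _ = p x * q (x - u) * conv p' (negp q') (t - s - u) := by ring

end Main

section Main2

open Function Real Finset

variable {G : Type*} [AddCommGroup G] {p q p' q' : G → ℝ}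

lemma regroup (hp : (support p).Finite) (hq : (support q).Finite)
    (hp' : (support p').Finite) (hq' : (support q').Finite) :
    conv (conv p p') (negp (conv q q'))
      = conv (conv p (negp q)) (conv p' (negp q')) := by
  have hnq : (support (negp q)).Finite := negp_fin hq
  have hnq' : (support (negp q')).Finite := negp_fin hq'
  rw [negp_conv]
  calc conv (conv p p') (conv (negp q) (negp q'))
      = conv p (conv p' (conv (negp q) (negp q'))) := conv_assoc p p' _ hp hp'
    _ = conv p (conv (conv p' (negp q)) (negp q')) := by
        rw [conv_assoc p' (negp q) (negp q') hp' hnq]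
    _ = conv p (conv (conv (negp q) p') (negp q')) := by rw [conv_comm p' (negp q)]
    _ = conv p (conv (negp q) (conv p' (negp q'))) := by
        rw [conv_assoc (negp q) p' (negp q') hnq hp']
    _ = conv (conv p (negp q)) (conv p' (negp q')) := (conv_assoc p (negp q) _ hp hnq).symm

lemma nuf_fin (hp : IsPMF p) (hq : IsPMF q) (t s : G) :
    (support (nuf p q p' q' t s)).Finite := by
  refine (hp.fin.sub hq.fin).subset (fun u hu => ?_)
  obtain ⟨x, hx, h2⟩ := nuf_supp t s u hu
  exact ⟨x, hx, x - u, h2, sub_sub_cancel x u⟩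

lemma gibbs_step (hp : IsPMF p) (hq : IsPMF q) (hp' : IsPMF p') (hq' : IsPMF q')
    {Sp SU : Finset G} (HSp : ∀ x, p x ≠ 0 → x ∈ Sp)
    (HSU : ∀ x u, p x ≠ 0 → q (x - u) ≠ 0 → u ∈ SU) (t s : G) :
    conv p p' t * conv q q' s * ent (nuf p q p' q' t s)
      ≤ ∑ u ∈ SU,
          (-(Kf p q p' q' t s u * Real.log (conv p (negp q) u))
            - Kf p q p' q' t s u * Real.log (conv p' (negp q') (t - s - u))
            + Kf p q p' q' t s u * Real.log (conv (conv p p') (negp (conv q q')) (t - s))) := by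
  set a := conv p (negp q) with ha_def
  set b := conv p' (negp q') with hb_def
  set c := conv (conv p p') (negp (conv q q')) with hc_def
  have ha0 : ∀ u, 0 ≤ a u := conv_nonneg' hp.1 (negp_nonneg hq.1)
  have hb0 : ∀ u, 0 ≤ b u := conv_nonneg' hp'.1 (negp_nonneg hq'.1)
  have hc0 : ∀ w, 0 ≤ c w :=
    conv_nonneg' (conv_nonneg' hp.1 hp'.1) (negp_nonneg (conv_nonneg' hq.1 hq'.1))
  have hafin : (support a).Finite := conv_fin hp.fin (negp_fin hq.fin)
  have hcw : ∀ w, c w = conv a b w := by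
    intro w
    rw [hc_def, regroup hp.fin hq.fin hp'.fin hq'.fin]
  rcases eq_or_ne (conv p p' t * conv q q' s) 0 with hPQ | hPQ
  · have hK0 : ∀ u, Kf p q p' q' t s u = 0 := fun u => by rw [Kf, hPQ, zero_mul]
    rw [hPQ, zero_mul]
    have hz : ∀ u ∈ SU,
        -(Kf p q p' q' t s u * Real.log (conv p (negp q) u))
          - Kf p q p' q' t s u * Real.log (conv p' (negp q') (t - s - u))
          + Kf p q p' q' t s u * Real.log (conv (conv p p') (negp (conv q q')) (t - s))
            = 0 := by
      intro u _
      rw [hK0 u]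
      ring
    rw [Finset.sum_congr rfl hz, Finset.sum_const_zero]
  · obtain ⟨hP, hQ⟩ := mul_ne_zero_iff.1 hPQ
    have hPQpos : 0 < conv p p' t * conv q q' s :=
      (mul_nonneg (conv_nonneg' hp.1 hp'.1 t) (conv_nonneg' hq.1 hq'.1 s)).lt_of_ne
        (Ne.symm hPQ)
    have hνnn : ∀ u, 0 ≤ nuf p q p' q' t s u := nuf_nonneg hp.1 hq.1 hp'.1 hq'.1 t s
    have hνS : ∀ u, nuf p q p' q' t s u ≠ 0 → u ∈ SU := by
      intro u hu
      obtain ⟨x, hx, h2⟩ := nuf_supp t s u hu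
      exact HSU x u hx h2
    have hνsum : ∑ᶠ u, nuf p q p' q' t s u = 1 := by
      have h1 : ∑ᶠ u, nuf p q p' q' t s u = ∑ u ∈ SU, nuf p q p' q' t s u :=
        sum_of_supp hνS
      have h2 : ∑ u ∈ SU, Kf p q p' q' t s u = conv p p' t * conv q q' s :=
        Kf_marg_u hp hq hp' hq' HSp HSU t s
      have h3 : ∑ u ∈ SU, Kf p q p' q' t s u
          = conv p p' t * conv q q' s * ∑ u ∈ SU, nuf p q p' q' t s u := by
        rw [Finset.mul_sum]
        exact Finset.sum_congr rfl (fun u _ => by rw [Kf, mul_assoc])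
      rw [h1]
      exact mul_left_cancel₀ hPQ (by rw [mul_one]; exact h3.symm.trans h2)
    -- the comparison distribution
    set g : G → ℝ := fun u => a u * b (t - s - u) / c (t - s) with hg_def
    have hg0 : ∀ u, 0 ≤ g u := fun u =>
      div_nonneg (mul_nonneg (ha0 u) (hb0 _)) (hc0 _)
    have hgfin : (support g).Finite := hafin.subset (fun u hu => by
      simp only [mem_support] at hu ⊢
      exact fun e => hu (by simp [hg_def, e]))
    have hg1 : ∑ᶠ u, g u ≤ 1 := by
      rcases eq_or_ne (c (t - s)) 0 with hc' | hc'
      · rw [finsum_eq_zero_of_forall_eq_zero (fun u => by simp [hg_def, hc'])]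
        norm_num
      · have habfin : (support fun u => a u * b (t - s - u)).Finite :=
          hafin.subset (fun u hu => by
            simp only [mem_support] at hu ⊢
            exact fun e => hu (by simp [e]))
        have : ∑ᶠ u, g u = (∑ᶠ u, a u * b (t - s - u)) * (c (t - s))⁻¹ := by
          rw [finsum_mul _ _]
          exact finsum_congr (fun u => by simp only [hg_def, div_eq_mul_inv])
        rw [this]
        have hconv : ∑ᶠ u, a u * b (t - s - u) = c (t - s) := by
          rw [hcw (t - s)]
          rfl
        rw [hconv, mul_inv_cancel₀ hc']
    have hfg : ∀ u, nuf p q p' q' t s u ≠ 0 → g u ≠ 0 := by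
      intro u hu
      have hKpos : 0 < Kf p q p' q' t s u := by
        rw [Kf]
        exact mul_pos hPQpos ((hνnn u).lt_of_ne (Ne.symm hu))
      have hab : 0 < a u * b (t - s - u) :=
        lt_of_lt_of_le hKpos (Kf_le hp hq hp' hq' HSp t s u)
      have hcpos : 0 < c (t - s) := by
        rw [hcw (t - s)]
        exact lt_of_lt_of_le hab (le_conv ha0 hb0 hafin u (t - s))
      exact ne_of_gt (div_pos hab hcpos)
    have hgibbs := gibbs hνnn (nuf_fin (p' := p') (q' := q') hp hq t s) hνsum hg0 hgfin hg1 hfg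
    -- multiply by the weight
    have hmul : conv p p' t * conv q q' s * ent (nuf p q p' q' t s)
        ≤ -∑ᶠ u, Kf p q p' q' t s u * Real.log (g u) := by
      have h1 : conv p p' t * conv q q' s * ent (nuf p q p' q' t s)
          ≤ conv p p' t * conv q q' s * (-∑ᶠ u, nuf p q p' q' t s u * Real.log (g u)) :=
        mul_le_mul_of_nonneg_left hgibbs hPQpos.le
      refine h1.trans_eq ?_
      rw [mul_neg, neg_inj]
      rw [mul_finsum (fun u => nuf p q p' q' t s u * Real.log (g u)) _]
      exact finsum_congr (fun u => by rw [Kf]; ring)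
    refine hmul.trans_eq ?_
    have hKS : ∀ u, Kf p q p' q' t s u * Real.log (g u) ≠ 0 → u ∈ SU := by
      intro u hu
      refine hνS u (fun e => hu ?_)
      rw [Kf, e]
      simp
    rw [sum_of_supp hKS, ← Finset.sum_neg_distrib]
    refine Finset.sum_congr rfl (fun u _ => ?_)
    rcases eq_or_ne (Kf p q p' q' t s u) 0 with hK | hK
    · rw [hK]; ring
    · have hKpos : 0 < Kf p q p' q' t s u :=
        (Kf_nonneg hp hq hp' hq' t s u).lt_of_ne (Ne.symm hK)
      have hab : 0 < a u * b (t - s - u) :=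
        lt_of_lt_of_le hKpos (Kf_le hp hq hp' hq' HSp t s u)
      have hau : a u ≠ 0 := fun e => by rw [e, zero_mul] at hab; exact lt_irrefl 0 hab
      have hbu : b (t - s - u) ≠ 0 := fun e => by
        rw [e, mul_zero] at hab; exact lt_irrefl 0 hab
      have hcpos : 0 < c (t - s) := by
        rw [hcw (t - s)]
        exact lt_of_lt_of_le hab (le_conv ha0 hb0 hafin u (t - s))
      have hlog : Real.log (g u)
          = Real.log (a u) + Real.log (b (t - s - u)) - Real.log (c (t - s)) := by
        rw [hg_def]
        show Real.log (a u * b (t - s - u) / c (t - s)) = _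
        rw [Real.log_div (mul_ne_zero hau hbu) (ne_of_gt hcpos),
          Real.log_mul hau hbu]
      rw [hlog]
      ring

end Main2

section Main3

open Function Real Finset

variable {G : Type*} [AddCommGroup G] {p q p' q' : G → ℝ}

lemma conv_neg_apply (f g : G → ℝ) (u : G) :
    conv f (negp g) u = ∑ᶠ x, f x * g (x - u) :=
  finsum_congr (fun x => by
    show f x * g (-(u - x)) = _
    rw [neg_sub])

lemma conv_neg_supp {f g : G → ℝ} {u : G} (h : conv f (negp g) u ≠ 0) :
    ∃ x, f x ≠ 0 ∧ g (x - u) ≠ 0 := by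
  obtain ⟨x, hx, h2⟩ := conv_ne_zero h
  rw [show negp g (u - x) = g (x - u) by show g (-(u-x)) = _; rw [neg_sub]] at h2
  exact ⟨x, hx, h2⟩

/-- marginal over `(t, s)`. -/
lemma Kf_marg_ts (hp : IsPMF p) (hq : IsPMF q) (hp' : IsPMF p') (hq' : IsPMF q')
    {Sp SP SQ : Finset G} (HSp : ∀ x, p x ≠ 0 → x ∈ Sp)
    (HSP : ∀ x t, p x ≠ 0 → p' (t - x) ≠ 0 → t ∈ SP)
    (HSQ : ∀ z s, q z ≠ 0 → q' (s - z) ≠ 0 → s ∈ SQ) (u : G) :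
    ∑ t ∈ SP, ∑ s ∈ SQ, Kf p q p' q' t s u = conv p (negp q) u := by
  have step1 : ∀ t, ∑ s ∈ SQ, Kf p q p' q' t s u
      = ∑ x ∈ Sp, p x * p' (t - x) * q (x - u) := by
    intro t
    rw [Finset.sum_congr rfl (fun s _ => Kf_eq_sum hp hq hp' hq' HSp t s u),
      Finset.sum_comm]
    refine Finset.sum_congr rfl (fun x _ => ?_)
    rcases eq_or_ne (q (x - u)) 0 with h0 | h0
    · simp [h0]
    · rw [Finset.sum_congr rfl (fun s _ => by
        show p x * p' (t - x) * (q (x - u) * q' (s - x + u))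
          = p x * p' (t - x) * q (x - u) * q' (s - (x - u))
        have : s - (x - u) = s - x + u := by abel
        rw [this]; ring)]
      rw [← Finset.mul_sum, sum_shift_eq_one hq'.sum_one (fun v hv => HSQ (x - u) v h0 hv),
        mul_one]
  rw [Finset.sum_congr rfl (fun t _ => step1 t), Finset.sum_comm]
  rw [conv_neg_apply, sum_of_supp (s := Sp) (f := fun x => p x * q (x - u))
    (fun x hx => HSp x (fun h0 => hx (by simp [h0])))]
  refine Finset.sum_congr rfl (fun x _ => ?_)
  rcases eq_or_ne (p x) 0 with h0 | h0
  · simp [h0]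
  · rw [Finset.sum_congr rfl (fun t _ => by
      show p x * p' (t - x) * q (x - u) = p x * q (x - u) * p' (t - x)
      ring)]
    rw [← Finset.mul_sum, sum_shift_eq_one hp'.sum_one (fun t ht => HSP x t h0 ht), mul_one]

lemma sumA1 (hp : IsPMF p) (hq : IsPMF q) (hp' : IsPMF p') (hq' : IsPMF q')
    {Sp SU SP SQ : Finset G} (HSp : ∀ x, p x ≠ 0 → x ∈ Sp)
    (HSU : ∀ x u, p x ≠ 0 → q (x - u) ≠ 0 → u ∈ SU)
    (HSP : ∀ x t, p x ≠ 0 → p' (t - x) ≠ 0 → t ∈ SP)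
    (HSQ : ∀ z s, q z ≠ 0 → q' (s - z) ≠ 0 → s ∈ SQ) :
    ∑ t ∈ SP, ∑ s ∈ SQ, ∑ u ∈ SU, Kf p q p' q' t s u * Real.log (conv p (negp q) u)
      = -ent (conv p (negp q)) := by
  rw [Finset.sum_congr rfl (fun t _ => Finset.sum_comm), Finset.sum_comm]
  have step : ∀ u ∈ SU, ∑ t ∈ SP, ∑ s ∈ SQ, Kf p q p' q' t s u * Real.log (conv p (negp q) u)
      = conv p (negp q) u * Real.log (conv p (negp q) u) := by
    intro u _
    rw [Finset.sum_congr rfl (fun t _ => (Finset.sum_mul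
      (s := SQ) (f := fun s => Kf p q p' q' t s u)
      (a := Real.log (conv p (negp q) u))).symm), ← Finset.sum_mul,
      Kf_marg_ts hp hq hp' hq' HSp HSP HSQ u]
  rw [Finset.sum_congr rfl step, ent_eq_sum (s := SU) (fun u hu => by
    obtain ⟨x, hx, h2⟩ := conv_neg_supp hu
    exact HSU x u hx h2), neg_neg]

end Main3

section Main4

open Function Real Finset

variable {G : Type*} [AddCommGroup G] {p q p' q' : G → ℝ}

lemma sumA3 (hp : IsPMF p) (hq : IsPMF q) (hp' : IsPMF p') (hq' : IsPMF q')
    {Sp SU SP SQ SW : Finset G} (HSp : ∀ x, p x ≠ 0 → x ∈ Sp)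
    (HSU : ∀ x u, p x ≠ 0 → q (x - u) ≠ 0 → u ∈ SU)
    (HSP' : ∀ t, conv p p' t ≠ 0 → t ∈ SP)
    (HSQ' : ∀ s, conv q q' s ≠ 0 → s ∈ SQ)
    (HSW : ∀ t w, conv p p' t ≠ 0 → conv q q' (t - w) ≠ 0 → w ∈ SW) :
    ∑ t ∈ SP, ∑ s ∈ SQ, ∑ u ∈ SU,
        Kf p q p' q' t s u * Real.log (conv (conv p p') (negp (conv q q')) (t - s))
      = -ent (conv (conv p p') (negp (conv q q'))) := by
  set P := conv p p' with hP_def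
  set Q := conv q q' with hQ_def
  set c := conv (conv p p') (negp (conv q q')) with hc_def
  have step1 : ∀ t s, ∑ u ∈ SU, Kf p q p' q' t s u * Real.log (c (t - s))
      = P t * Q s * Real.log (c (t - s)) := by
    intro t s
    rw [← Finset.sum_mul, Kf_marg_u hp hq hp' hq' HSp HSU t s]
  rw [Finset.sum_congr rfl (fun t _ => Finset.sum_congr rfl (fun s _ => step1 t s))]
  have step2 : ∀ t ∈ SP, ∑ s ∈ SQ, P t * Q s * Real.log (c (t - s))
      = ∑ w ∈ SW, P t * Q (t - w) * Real.log (c w) := by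
    intro t _
    rcases eq_or_ne (P t) 0 with h0 | h0
    · simp [h0]
    · rw [← sum_of_supp (s := SQ) (f := fun s => P t * Q s * Real.log (c (t - s)))
        (fun s hs => HSQ' s (fun e => hs (by simp [e])))]
      rw [← finsum_sub_left (fun s => P t * Q s * Real.log (c (t - s))) t]
      rw [finsum_congr (fun w => by
        show P t * Q (t - w) * Real.log (c (t - (t - w))) = P t * Q (t - w) * Real.log (c w)
        rw [sub_sub_cancel])]
      exact sum_of_supp (fun w hw => HSW t w h0 (fun e => hw (by simp [e])))
  rw [Finset.sum_congr rfl step2, Finset.sum_comm]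
  have step3 : ∀ w ∈ SW, ∑ t ∈ SP, P t * Q (t - w) * Real.log (c w)
      = c w * Real.log (c w) := by
    intro w _
    rw [← Finset.sum_mul]
    congr 1
    have : c w = ∑ᶠ t, P t * Q (t - w) := conv_neg_apply P Q w
    rw [this]
    exact (sum_of_supp (fun t ht => HSP' t (fun e => ht (by simp [e])))).symm
  rw [Finset.sum_congr rfl step3, ent_eq_sum (s := SW) (fun w hw => by
    obtain ⟨t, ht, h2⟩ := conv_neg_supp hw
    exact HSW t w ht h2), neg_neg]

end Main4

section Main5

open Function Real Finset

variable {G : Type*} [AddCommGroup G] {p q p' q' : G → ℝ}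

lemma sumA2 (hp : IsPMF p) (hq : IsPMF q) (hp' : IsPMF p') (hq' : IsPMF q')
    {Sp Sp' SU SP SQ SW' : Finset G}
    (HSp : ∀ x, p x ≠ 0 → x ∈ Sp)
    (HSp' : ∀ y, p' y ≠ 0 → y ∈ Sp')
    (HSU : ∀ x u, p x ≠ 0 → q (x - u) ≠ 0 → u ∈ SU)
    (HSP : ∀ x t, p x ≠ 0 → p' (t - x) ≠ 0 → t ∈ SP)
    (HSQ : ∀ z s, q z ≠ 0 → q' (s - z) ≠ 0 → s ∈ SQ)
    (HSW' : ∀ y w, p' y ≠ 0 → q' (y - w) ≠ 0 → w ∈ SW') :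
    ∑ t ∈ SP, ∑ s ∈ SQ, ∑ u ∈ SU,
        Kf p q p' q' t s u * Real.log (conv p' (negp q') (t - s - u))
      = -ent (conv p' (negp q')) := by
  classical
  set b := conv p' (negp q') with hb_def
  set ρ : G → ℝ := fun y => ∑ᶠ v, q' v * Real.log (b (y - v)) with hρ
  set σ : ℝ := ∑ᶠ y, p' y * ρ y with hσ
  have hq'fin : ∀ y : G, (support fun v => q' v * Real.log (b (y - v))).Finite :=
    fun y => hq'.fin.subset (fun v hv => by
      simp only [mem_support] at hv ⊢
      exact fun e => hv (by simp [e]))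
  -- expand K and reorder the sums
  have step1 : ∀ t s u, Kf p q p' q' t s u * Real.log (b (t - s - u))
      = ∑ x ∈ Sp, p x * p' (t - x) * (q (x - u) * q' (s - x + u))
          * Real.log (b (t - s - u)) := by
    intro t s u
    rw [Kf_eq_sum hp hq hp' hq' HSp, Finset.sum_mul]
  rw [Finset.sum_congr rfl (fun t _ => Finset.sum_congr rfl (fun s _ =>
    Finset.sum_congr rfl (fun u _ => step1 t s u)))]
  -- now  Σ_t Σ_s Σ_u Σ_x  ; reorder to  Σ_x Σ_u Σ_t Σ_s
  rw [Finset.sum_congr rfl (fun t _ => Finset.sum_congr rfl (fun s _ => Finset.sum_comm)),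
    Finset.sum_congr rfl (fun t _ => Finset.sum_comm),
    Finset.sum_congr rfl (fun t _ => Finset.sum_congr rfl (fun x _ => Finset.sum_comm)),
    Finset.sum_comm,
    Finset.sum_congr rfl (fun x _ => Finset.sum_comm)]
  -- innermost sum over s
  have step2 : ∀ x t u, ∑ s ∈ SQ, p x * p' (t - x) * (q (x - u) * q' (s - x + u))
        * Real.log (b (t - s - u))
      = p x * q (x - u) * (p' (t - x) * ρ (t - x)) := by
    intro x t u
    rcases eq_or_ne (q (x - u)) 0 with hqu | hqu
    · simp [hqu]
    · calc ∑ s ∈ SQ, p x * p' (t - x) * (q (x - u) * q' (s - x + u))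
            * Real.log (b (t - s - u))
          = ∑ᶠ s, p x * p' (t - x) * (q (x - u) * q' (s - x + u))
            * Real.log (b (t - s - u)) := by
            refine (sum_of_supp (fun s hs => ?_)).symm
            have h2 : q' (s - x + u) ≠ 0 := fun e => hs (by simp [e])
            refine HSQ (x - u) s hqu ?_
            rwa [show s - (x - u) = s - x + u by abel]
        _ = ∑ᶠ v, p x * p' (t - x) * (q (x - u) * q' (v + (x - u) - x + u))
            * Real.log (b (t - (v + (x - u)) - u)) := by
            exact (finsum_comp_equiv (Equiv.addRight (x - u))
              (f := fun s => p x * p' (t - x) * (q (x - u) * q' (s - x + u))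
                * Real.log (b (t - s - u)))).symm
        _ = ∑ᶠ v, (p x * q (x - u) * p' (t - x))
            * (q' v * Real.log (b (t - x - v))) := by
            refine finsum_congr (fun v => ?_)
            rw [show v + (x - u) - x + u = v by abel,
              show t - (v + (x - u)) - u = t - x - v by abel]
            ring
        _ = (p x * q (x - u) * p' (t - x)) * ρ (t - x) := by
            rw [mul_finsum (fun v => q' v * Real.log (b (t - x - v))) _]
        _ = p x * q (x - u) * (p' (t - x) * ρ (t - x)) := by ring
  rw [Finset.sum_congr rfl (fun x _ => Finset.sum_congr rfl (fun u _ =>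
    Finset.sum_congr rfl (fun t _ => step2 x t u)))]
  -- sum over t
  have step3 : ∀ x u, ∑ t ∈ SP, p x * q (x - u) * (p' (t - x) * ρ (t - x))
      = p x * q (x - u) * σ := by
    intro x u
    rcases eq_or_ne (p x) 0 with hpx | hpx
    · simp [hpx]
    · rw [← Finset.mul_sum]
      congr 1
      calc ∑ t ∈ SP, p' (t - x) * ρ (t - x)
          = ∑ᶠ t, p' (t - x) * ρ (t - x) :=
            (sum_of_supp (fun t ht => HSP x t hpx (fun e => ht (by simp [e])))).symm
        _ = σ := by
            rw [← finsum_comp_equiv (Equiv.addRight x)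
              (f := fun t => p' (t - x) * ρ (t - x)), hσ]
            exact finsum_congr (fun y => by simp)
  rw [Finset.sum_congr rfl (fun x _ => Finset.sum_congr rfl (fun u _ => step3 x u))]
  -- sum over u
  have step4 : ∀ x, ∑ u ∈ SU, p x * q (x - u) * σ = p x * σ := by
    intro x
    rcases eq_or_ne (p x) 0 with hpx | hpx
    · simp [hpx]
    · rw [Finset.sum_congr rfl (fun u _ => show p x * q (x - u) * σ
        = (p x * σ) * q (x - u) by ring), ← Finset.mul_sum,
        sum_shift_left_eq_one hq.sum_one (fun u hu => HSU x u hpx hu), mul_one]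
  rw [Finset.sum_congr rfl (fun x _ => step4 x), ← Finset.sum_mul, sum_eq_one hp HSp,
    one_mul]
  -- compute σ
  have hρ2 : ∀ y, ρ y = ∑ᶠ w, q' (y - w) * Real.log (b w) := by
    intro y
    rw [hρ]
    calc (∑ᶠ v, q' v * Real.log (b (y - v)))
        = ∑ᶠ v, (fun w => q' (y - w) * Real.log (b w)) (y - v) := by
          refine finsum_congr (fun v => ?_)
          show _ = q' (y - (y - v)) * Real.log (b (y - v))
          rw [sub_sub_cancel]
      _ = ∑ᶠ w, q' (y - w) * Real.log (b w) := finsum_sub_left (fun w => q' (y - w) * Real.log (b w)) y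
  rw [hσ, sum_of_supp (s := Sp') (f := fun y => p' y * ρ y)
    (fun y hy => HSp' y (fun e => hy (by simp [e])))]
  have step5 : ∀ y ∈ Sp', p' y * ρ y
      = ∑ w ∈ SW', p' y * (q' (y - w) * Real.log (b w)) := by
    intro y _
    rcases eq_or_ne (p' y) 0 with hpy | hpy
    · simp [hpy]
    · rw [hρ2 y, sum_of_supp (s := SW') (f := fun w => q' (y - w) * Real.log (b w))
        (fun w hw => HSW' y w hpy (fun e => hw (by simp [e]))), Finset.mul_sum]
  rw [Finset.sum_congr rfl step5, Finset.sum_comm]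
  have step6 : ∀ w ∈ SW', ∑ y ∈ Sp', p' y * (q' (y - w) * Real.log (b w))
      = b w * Real.log (b w) := by
    intro w _
    rw [Finset.sum_congr rfl (fun y _ => show p' y * (q' (y - w) * Real.log (b w))
      = (p' y * q' (y - w)) * Real.log (b w) by ring), ← Finset.sum_mul]
    congr 1
    rw [show b w = ∑ᶠ y, p' y * q' (y - w) from conv_neg_apply p' q' w]
    exact (sum_of_supp (fun y hy => HSp' y (fun e => hy (by simp [e])))).symm
  rw [Finset.sum_congr rfl step6, ent_eq_sum (s := SW') (fun w hw => by
    obtain ⟨y, hy, h2⟩ := conv_neg_supp hw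
    exact HSW' y w hy h2), neg_neg]

end Main5

section Final

open Function Real Finset

variable {G : Type*} [AddCommGroup G] {p q p' q' : G → ℝ}

lemma chain_rule' (hf : IsPMF p) (hg : IsPMF p') :
    ∑ᶠ t, conv p p' t * ent (ctf p p' t) = ent p + ent p' - ent (conv p p') :=
  chain_rule hf hg

/-- The main entropy inequality. -/
lemma main_ineq (hp : IsPMF p) (hq : IsPMF q) (hp' : IsPMF p') (hq' : IsPMF q') :
    (∑ᶠ t, ∑ᶠ s, conv p p' t * conv q q' s * ent (nuf p q p' q' t s))
      ≤ ent (conv p (negp q)) + ent (conv p' (negp q'))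
        - ent (conv (conv p p') (negp (conv q q'))) := by
  classical
  set Sp := hp.fin.toFinset with hSp_def
  set Sq := hq.fin.toFinset with hSq_def
  set Sp' := hp'.fin.toFinset with hSp'_def
  set Sq' := hq'.fin.toFinset with hSq'_def
  set SU := Sp - Sq with hSU_def
  set SP := Sp + Sp' with hSP_def
  set SQ := Sq + Sq' with hSQ_def
  set SW := SP - SQ with hSW_def
  set SW' := Sp' - Sq' with hSW'_def
  have HSp : ∀ x, p x ≠ 0 → x ∈ Sp := fun x hx => by simp [hSp_def, hx]
  have HSp' : ∀ y, p' y ≠ 0 → y ∈ Sp' := fun y hy => by simp [hSp'_def, hy]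
  have HSU : ∀ x u, p x ≠ 0 → q (x - u) ≠ 0 → u ∈ SU := fun x u h1 h2 =>
    Finset.mem_sub.2 ⟨x, by simp [hSp_def, h1], x - u, by simp [hSq_def, h2],
      sub_sub_cancel x u⟩
  have HSP : ∀ x t, p x ≠ 0 → p' (t - x) ≠ 0 → t ∈ SP := fun x t h1 h2 =>
    Finset.mem_add.2 ⟨x, by simp [hSp_def, h1], t - x, by simp [hSp'_def, h2], by simp⟩
  have HSQ : ∀ z s, q z ≠ 0 → q' (s - z) ≠ 0 → s ∈ SQ := fun z s h1 h2 =>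
    Finset.mem_add.2 ⟨z, by simp [hSq_def, h1], s - z, by simp [hSq'_def, h2], by simp⟩
  have HSP' : ∀ t, conv p p' t ≠ 0 → t ∈ SP := fun t ht => by
    obtain ⟨x, hx, h2⟩ := conv_ne_zero ht
    exact HSP x t hx h2
  have HSQ' : ∀ s, conv q q' s ≠ 0 → s ∈ SQ := fun s hs => by
    obtain ⟨z, hz, h2⟩ := conv_ne_zero hs
    exact HSQ z s hz h2
  have HSW : ∀ t w, conv p p' t ≠ 0 → conv q q' (t - w) ≠ 0 → w ∈ SW := fun t w h1 h2 =>
    Finset.mem_sub.2 ⟨t, HSP' t h1, t - w, HSQ' _ h2, sub_sub_cancel t w⟩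
  have HSW' : ∀ y w, p' y ≠ 0 → q' (y - w) ≠ 0 → w ∈ SW' := fun y w h1 h2 =>
    Finset.mem_sub.2 ⟨y, by simp [hSp'_def, h1], y - w, by simp [hSq'_def, h2],
      sub_sub_cancel y w⟩
  have hconv : (∑ᶠ t, ∑ᶠ s, conv p p' t * conv q q' s * ent (nuf p q p' q' t s))
      = ∑ t ∈ SP, ∑ s ∈ SQ, conv p p' t * conv q q' s * ent (nuf p q p' q' t s) :=
    finsum2_eq (fun t s hts =>
      ⟨HSP' t (fun e => hts (by rw [e]; ring)), HSQ' s (fun e => hts (by rw [e]; ring))⟩)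
  rw [hconv]
  have hle := Finset.sum_le_sum (s := SP) (f := fun t => ∑ s ∈ SQ,
      conv p p' t * conv q q' s * ent (nuf p q p' q' t s))
    (g := fun t => ∑ s ∈ SQ, ∑ u ∈ SU,
      (-(Kf p q p' q' t s u * Real.log (conv p (negp q) u))
        - Kf p q p' q' t s u * Real.log (conv p' (negp q') (t - s - u))
        + Kf p q p' q' t s u * Real.log (conv (conv p p') (negp (conv q q')) (t - s))))
    (fun t _ => Finset.sum_le_sum (fun s _ => gibbs_step hp hq hp' hq' HSp HSU t s))
  refine hle.trans_eq ?_
  simp only [Finset.sum_add_distrib, Finset.sum_sub_distrib, Finset.sum_neg_distrib]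
  rw [sumA1 hp hq hp' hq' HSp HSU HSP HSQ,
    sumA2 hp hq hp' hq' HSp HSp' HSU HSP HSQ HSW',
    sumA3 hp hq hp' hq' HSp HSU HSP' HSQ' HSW]
  ring

end Final


section TheEnd

open Function Real Finset

/-- fibring application:
`d[X;Y] + d[(n-1)X;(n-1)Y] ≥ d[nX;nY] + d[X|nX; Y|nY]` for `n ≥ 2`. -/
theorem fibring_application {G : Type*} [AddCommGroup G] (p q : G → ℝ)
    (hp : IsPMF p) (hq : IsPMF q) (n : ℕ) (hn : 2 ≤ n) :
    rdist (iterConv p n) (iterConv q n) + condRdist p q n ≤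
      rdist p q + rdist (iterConv p (n - 1)) (iterConv q (n - 1)) := by
  classical
  have hn1 : n - 1 + 1 = n := by omega
  set p' := iterConv p (n - 1) with hp'_def
  set q' := iterConv q (n - 1) with hq'_def
  have hp' : IsPMF p' := iterConv_isPMF hp (n - 1)
  have hq' : IsPMF q' := iterConv_isPMF hq (n - 1)
  have hPcomm : iterConv p n = conv p p' := by
    rw [← hn1]
    show conv p' p = conv p p'
    exact conv_comm p' p
  have hQcomm : iterConv q n = conv q q' := by
    rw [← hn1]
    show conv q' q = conv q q'
    exact conv_comm q' q
  have hct : ∀ t, condAt p n t = ctf p p' t := by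
    intro t
    funext x
    show p x * p' (t - x) / iterConv p n t = p x * p' (t - x) / conv p p' t
    rw [hPcomm]
  have hcs : ∀ s, condAt q n s = ctf q q' s := by
    intro s
    funext x
    show q x * q' (s - x) / iterConv q n s = q x * q' (s - x) / conv q q' s
    rw [hQcomm]
  have hrd : ∀ t s, iterConv p n t * iterConv q n s * rdist (condAt p n t) (condAt q n s)
      = conv p p' t * conv q q' s *
        (ent (nuf p q p' q' t s) - ent (ctf p p' t) / 2 - ent (ctf q q' s) / 2) := by
    intro t s
    rw [hct t, hcs s, hPcomm, hQcomm]
    rfl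
  -- finsets for converting the conditional sum
  set SP := hp.fin.toFinset + hp'.fin.toFinset with hSP_def
  set SQ := hq.fin.toFinset + hq'.fin.toFinset with hSQ_def
  have HSP' : ∀ t, conv p p' t ≠ 0 → t ∈ SP := by
    intro t ht
    obtain ⟨x, hx, h2⟩ := conv_ne_zero ht
    exact Finset.mem_add.2 ⟨x, by simp [hx], t - x, by simp [h2], by simp⟩
  have HSQ' : ∀ s, conv q q' s ≠ 0 → s ∈ SQ := by
    intro s hs
    obtain ⟨z, hz, h2⟩ := conv_ne_zero hs
    exact Finset.mem_add.2 ⟨z, by simp [hz], s - z, by simp [h2], by simp⟩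
  have hQpmf : IsPMF (conv q q') := conv_isPMF hq hq'
  have hPpmf : IsPMF (conv p p') := conv_isPMF hp hp'
  have hCSconv : (∑ᶠ t, ∑ᶠ s, conv p p' t * conv q q' s * ent (nuf p q p' q' t s))
      = ∑ t ∈ SP, ∑ s ∈ SQ, conv p p' t * conv q q' s * ent (nuf p q p' q' t s) :=
    finsum2_eq (fun t s hts =>
      ⟨HSP' t (fun e => hts (by rw [e]; ring)), HSQ' s (fun e => hts (by rw [e]; ring))⟩)
  have hcondR : condRdist p q n
      = (∑ t ∈ SP, ∑ s ∈ SQ, conv p p' t * conv q q' s * ent (nuf p q p' q' t s))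
        - (∑ᶠ t, conv p p' t * ent (ctf p p' t)) / 2
        - (∑ᶠ s, conv q q' s * ent (ctf q q' s)) / 2 := by
    rw [condRdist]
    rw [finsum_congr (fun t => finsum_congr (fun s => hrd t s))]
    rw [finsum2_eq (s := SP) (t := SQ) (fun t s hts =>
      ⟨HSP' t (fun e => hts (by rw [e]; ring)), HSQ' s (fun e => hts (by rw [e]; ring))⟩)]
    have hterm : ∀ t ∈ SP, ∀ s ∈ SQ, conv p p' t * conv q q' s *
          (ent (nuf p q p' q' t s) - ent (ctf p p' t) / 2 - ent (ctf q q' s) / 2)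
        = conv p p' t * conv q q' s * ent (nuf p q p' q' t s)
          - (conv p p' t * ent (ctf p p' t) / 2) * conv q q' s
          - (conv q q' s * ent (ctf q q' s) / 2) * conv p p' t := by
      intro t _ s _
      ring
    rw [Finset.sum_congr rfl (fun t ht => Finset.sum_congr rfl (fun s hs =>
      hterm t ht s hs))]
    simp only [Finset.sum_sub_distrib]
    have hB : ∑ t ∈ SP, ∑ s ∈ SQ, (conv p p' t * ent (ctf p p' t) / 2) * conv q q' s
        = (∑ᶠ t, conv p p' t * ent (ctf p p' t)) / 2 := by
      rw [Finset.sum_congr rfl (fun t _ => by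
        rw [← Finset.mul_sum, sum_eq_one hQpmf HSQ', mul_one])]
      rw [← Finset.sum_div]
      congr 1
      exact (sum_of_supp (fun t ht => HSP' t (fun e => ht (by rw [e]; ring)))).symm
    have hC : ∑ t ∈ SP, ∑ s ∈ SQ, (conv q q' s * ent (ctf q q' s) / 2) * conv p p' t
        = (∑ᶠ s, conv q q' s * ent (ctf q q' s)) / 2 := by
      rw [Finset.sum_comm]
      rw [Finset.sum_congr rfl (fun s _ => by
        rw [← Finset.mul_sum, sum_eq_one hPpmf HSP', mul_one])]
      rw [← Finset.sum_div]
      congr 1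
      exact (sum_of_supp (fun s hs => HSQ' s (fun e => hs (by rw [e]; ring)))).symm
    rw [hB, hC]
  have hchain_p := chain_rule' hp hp'
  have hchain_q := chain_rule' hq hq'
  have hmain := main_ineq hp hq hp' hq'
  rw [hCSconv] at hmain
  rw [hPcomm, hQcomm, hcondR]
  show ent (conv (conv p p') (negp (conv q q'))) - ent (conv p p') / 2
        - ent (conv q q') / 2 + _
      ≤ (ent (conv p (negp q)) - ent p / 2 - ent q / 2)
        + (ent (conv p' (negp q')) - ent p' / 2 - ent q' / 2)
  linarith [hmain, hchain_p, hchain_q]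

end TheEnd
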